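/- Let r ≥ 4 and let x, y ∈ [r] with x ≠ y. Define V ∈ ℝ^(𝒫([r])) by V_T = 1_T(x) − 1_T(y), where 1_T(z) = 1 if z ∈ T and 0 otherwise. Then V is an eigenvector of M_r with eigenvalue 2^(r−3)·(r − 2). -/

import Mathlib

/-- The matrix `M_r`, indexed by subsets `S, T ⊆ [r]`, with entry
`C(|S ∩ T|, 2) + C(|Sᶜ ∩ Tᶜ|, 2)`. -/
def Mmat (r : ℕ) : Matrix (Finset (Fin r)) (Finset (Fin r)) ℝ :=
  fun S T => ((S ∩ T).card.choose 2 : ℝ) + ((Sᶜ ∩ Tᶜ).card.choose 2 : ℝ)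

namespace FamilyEAux

open Finset

variable {r : ℕ}



lemma count_general (R F : Finset (Fin r)) (h : Disjoint R F) :
    (Finset.univ.filter (fun T => R ⊆ T ∧ Disjoint F T)).card
      = 2 ^ (r - (R.card + F.card)) := by
  have hcard : ((Finset.univ : Finset (Fin r)) \ (R ∪ F)).powerset.card
      = 2 ^ (r - (R.card + F.card)) := by
    rw [card_powerset, card_sdiff_of_subset (subset_univ _), card_union_of_disjoint h]
    simp
  rw [← hcard]
  apply Finset.card_nbij' (fun T => T \ R) (fun U => U ∪ R)
  · intro T hT
    simp only [mem_coe, mem_filter, mem_univ, true_and] at hT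
    rw [mem_coe, mem_powerset]
    intro a ha
    simp only [mem_sdiff] at ha ⊢
    simp only [mem_union, mem_univ, true_and]
    push_neg
    exact ⟨ha.2, disjoint_right.mp hT.2 ha.1⟩
  · intro U hU
    rw [mem_coe, mem_powerset] at hU
    simp only [mem_coe, mem_filter, mem_univ, true_and]
    refine ⟨subset_union_right, ?_⟩
    rw [disjoint_union_right]
    constructor
    · intro W hWF hWU
      intro a haW
      have := hU (hWU haW)
      simp only [mem_sdiff, mem_union] at this
      exact absurd (hWF haW) (fun hh => this.2 (Or.inr hh))
    · exact h.symm
  · intro T hT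
    simp only [mem_coe, mem_filter, mem_univ, true_and] at hT
    exact sdiff_union_of_subset hT.1
  · intro U hU
    rw [mem_coe, mem_powerset] at hU
    dsimp only
    rw [union_sdiff_right]
    apply sdiff_eq_self_of_disjoint
    intro W hWU hWR a haW
    have := hU (hWU haW)
    simp only [mem_sdiff, mem_union] at this
    exact absurd (hWR haW) (fun hh => this.2 (Or.inl hh))

lemma countA (u v : Fin r) (huv : u ≠ v) :
    (Finset.univ.filter (fun T : Finset (Fin r) => u ∈ T ∧ v ∉ T)).card = 2 ^ (r - 2) := by
  have h := count_general ({u} : Finset (Fin r)) {v} (by simp [huv.symm, huv])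
  simp only [card_singleton] at h
  rw [← h]
  congr 1
  apply filter_congr
  intro T _
  simp [singleton_subset_iff, disjoint_left]

lemma countB (u v a : Fin r) (huv : u ≠ v) (hau : a ≠ u) (hav : a ≠ v) :
    (Finset.univ.filter (fun T : Finset (Fin r) => (u ∈ T ∧ v ∉ T) ∧ a ∈ T)).card
      = 2 ^ (r - 3) := by
  have h := count_general ({u, a} : Finset (Fin r)) {v}
    (by simp [huv.symm, hav.symm])
  have hc : ({u, a} : Finset (Fin r)).card = 2 := by
    rw [card_insert_of_notMem (by simp [hau.symm]), card_singleton]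
  simp only [hc, card_singleton] at h
  rw [← h]
  congr 1
  apply filter_congr
  intro T _
  simp only [insert_subset_iff, singleton_subset_iff, disjoint_left, mem_singleton]
  constructor
  · rintro ⟨⟨h1, h2⟩, h3⟩
    exact ⟨⟨h1, h3⟩, by rintro b rfl; exact h2⟩
  · rintro ⟨⟨h1, h3⟩, h2⟩
    exact ⟨⟨h1, h2 rfl⟩, h3⟩

lemma countC (u v a : Fin r) (huv : u ≠ v) (hau : a ≠ u) (hav : a ≠ v) :
    (Finset.univ.filter (fun T : Finset (Fin r) => (u ∈ T ∧ v ∉ T) ∧ a ∉ T)).card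
      = 2 ^ (r - 3) := by
  have h := count_general ({u} : Finset (Fin r)) {v, a}
    (by simp [huv.symm, hau, huv, hau.symm])
  have hc : ({v, a} : Finset (Fin r)).card = 2 := by
    rw [card_insert_of_notMem (by simp [hav.symm]), card_singleton]
  simp only [hc, card_singleton] at h
  rw [← h]
  congr 1
  apply filter_congr
  intro T _
  simp only [singleton_subset_iff, disjoint_left, mem_insert, mem_singleton]
  constructor
  · rintro ⟨⟨h1, h2⟩, h3⟩
    exact ⟨h1, by rintro b (rfl | rfl) <;> assumption⟩
  · rintro ⟨h1, h2⟩
    exact ⟨⟨h1, h2 (Or.inl rfl)⟩, h2 (Or.inr rfl)⟩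

lemma sumInter (S : Finset (Fin r)) (u v : Fin r) (huv : u ≠ v)
    (huS : u ∈ S) (hvS : v ∉ S) :
    ∑ T ∈ Finset.univ.filter (fun T : Finset (Fin r) => u ∈ T ∧ v ∉ T), (S ∩ T).card
      = 2 ^ (r - 2) + (S.card - 1) * 2 ^ (r - 3) := by
  have step1 : ∀ T : Finset (Fin r), (S ∩ T).card = ∑ a ∈ S, if a ∈ T then 1 else 0 := by
    intro T
    rw [← filter_mem_eq_inter, card_filter]
  simp only [step1]
  rw [Finset.sum_comm]
  have step2 : ∀ a : Fin r,
      (∑ T ∈ Finset.univ.filter (fun T : Finset (Fin r) => u ∈ T ∧ v ∉ T),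
        if a ∈ T then 1 else 0)
      = (Finset.univ.filter (fun T : Finset (Fin r) => (u ∈ T ∧ v ∉ T) ∧ a ∈ T)).card := by
    intro a
    rw [← card_filter, filter_filter]
  simp only [step2]
  rw [← Finset.add_sum_erase _ _ huS]
  have hu : (Finset.univ.filter
      (fun T : Finset (Fin r) => (u ∈ T ∧ v ∉ T) ∧ u ∈ T)).card = 2 ^ (r - 2) := by
    rw [← countA u v huv]
    congr 1
    apply filter_congr
    intro T _
    tauto
  rw [hu]
  congr 1
  rw [Finset.sum_congr rfl (fun a ha => ?_), Finset.sum_const, card_erase_of_mem huS,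
    smul_eq_mul]
  rw [countB u v a huv (mem_erase.mp ha).1 (fun h => hvS (h ▸ (mem_erase.mp ha).2))]

lemma sumCompl (S : Finset (Fin r)) (u v : Fin r) (huv : u ≠ v)
    (huS : u ∈ S) (hvS : v ∉ S) :
    ∑ T ∈ Finset.univ.filter (fun T : Finset (Fin r) => u ∈ T ∧ v ∉ T), (Sᶜ ∩ Tᶜ).card
      = 2 ^ (r - 2) + (Sᶜ.card - 1) * 2 ^ (r - 3) := by
  have step1 : ∀ T : Finset (Fin r), (Sᶜ ∩ Tᶜ).card = ∑ a ∈ Sᶜ, if a ∉ T then 1 else 0 := by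
    intro T
    rw [← filter_mem_eq_inter, card_filter]
    apply Finset.sum_congr rfl
    intro a _
    simp [Finset.mem_compl]
  simp only [step1]
  rw [Finset.sum_comm]
  have step2 : ∀ a : Fin r,
      (∑ T ∈ Finset.univ.filter (fun T : Finset (Fin r) => u ∈ T ∧ v ∉ T),
        if a ∉ T then 1 else 0)
      = (Finset.univ.filter (fun T : Finset (Fin r) => (u ∈ T ∧ v ∉ T) ∧ a ∉ T)).card := by
    intro a
    rw [← card_filter, filter_filter]
  simp only [step2]
  have hvSc : v ∈ Sᶜ := Finset.mem_compl.mpr hvS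
  rw [← Finset.add_sum_erase _ _ hvSc]
  have hv : (Finset.univ.filter
      (fun T : Finset (Fin r) => (u ∈ T ∧ v ∉ T) ∧ v ∉ T)).card = 2 ^ (r - 2) := by
    rw [← countA u v huv]
    congr 1
    apply filter_congr
    intro T _
    tauto
  rw [hv]
  congr 1
  rw [Finset.sum_congr rfl (fun a ha => ?_), Finset.sum_const, card_erase_of_mem hvSc,
    smul_eq_mul]
  have hav : a ≠ v := (mem_erase.mp ha).1
  have hau : a ≠ u := by
    rintro rfl
    exact (Finset.mem_compl.mp (mem_erase.mp ha).2) huS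
  rw [countC u v a huv hau hav]


-- set identities
lemma L1 {α : Type*} [DecidableEq α] (S W : Finset α) (u v : α) (hv : v ∉ S) :
    S ∩ insert v (W.erase u) = (S ∩ W).erase u := by
  ext a
  simp only [mem_inter, mem_insert, mem_erase]
  constructor
  · rintro ⟨haS, (rfl | ⟨hau, haW⟩)⟩
    · exact absurd haS hv
    · exact ⟨hau, haS, haW⟩
  · rintro ⟨hau, haS, haW⟩
    exact ⟨haS, Or.inr ⟨hau, haW⟩⟩

lemma L2 {α : Type*} [DecidableEq α] (S W : Finset α) (u v : α) (hv : v ∈ S) :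
    S ∩ insert v (W.erase u) = insert v ((S ∩ W).erase u) := by
  ext a
  simp only [mem_inter, mem_insert, mem_erase]
  constructor
  · rintro ⟨haS, (rfl | ⟨hau, haW⟩)⟩
    · exact Or.inl rfl
    · exact Or.inr ⟨hau, haS, haW⟩
  · rintro (rfl | ⟨hau, haS, haW⟩)
    · exact ⟨hv, Or.inl rfl⟩
    · exact ⟨haS, Or.inr ⟨hau, haW⟩⟩

lemma Lcompl (T : Finset (Fin r)) (u v : Fin r) (huv : u ≠ v) (huT : u ∈ T) (hvT : v ∉ T) :
    (insert v (T.erase u))ᶜ = insert u (Tᶜ.erase v) := by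
  ext a
  by_cases hau : a = u <;> by_cases hav : a = v <;>
    simp_all [Finset.mem_compl, Finset.mem_insert, Finset.mem_erase]

lemma card_insert_erase {α : Type*} [DecidableEq α] (W : Finset α) (d e : α)
    (hd : d ∈ W) (he : e ∉ W) : (insert e (W.erase d)).card = W.card := by
  rw [card_insert_of_notMem (fun h => he (mem_of_mem_erase h)), card_erase_add_one hd]

-- cards in the asymmetric case
lemma cards_asym (S T : Finset (Fin r)) (u v : Fin r) (huv : u ≠ v)
    (huS : u ∈ S) (hvS : v ∉ S) (huT : u ∈ T) (hvT : v ∉ T) :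
    (S ∩ insert v (T.erase u)).card + 1 = (S ∩ T).card ∧
    (Sᶜ ∩ (insert v (T.erase u))ᶜ).card + 1 = (Sᶜ ∩ Tᶜ).card := by
  constructor
  · rw [L1 S T u v hvS, card_erase_add_one (mem_inter.mpr ⟨huS, huT⟩)]
  · rw [Lcompl T u v huv huT hvT, L1 Sᶜ Tᶜ v u (by simpa using huS),
      card_erase_add_one (mem_inter.mpr ⟨by simpa using hvS, by simpa using hvT⟩)]

-- cards in the symmetric case
lemma cards_sym (S T : Finset (Fin r)) (u v : Fin r) (huv : u ≠ v)
    (hS : u ∈ S ↔ v ∈ S) (huT : u ∈ T) (hvT : v ∉ T) :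
    (S ∩ insert v (T.erase u)).card = (S ∩ T).card ∧
    (Sᶜ ∩ (insert v (T.erase u))ᶜ).card = (Sᶜ ∩ Tᶜ).card := by
  rw [Lcompl T u v huv huT hvT]
  by_cases huS : u ∈ S
  · have hvS : v ∈ S := hS.mp huS
    constructor
    · rw [L2 S T u v hvS, card_insert_erase _ _ _ (mem_inter.mpr ⟨huS, huT⟩)
        (fun h => hvT (mem_inter.mp h).2)]
    · rw [L1 Sᶜ Tᶜ v u (by simpa using huS), erase_eq_of_notMem
        (fun h => (by simpa using hvS : v ∉ Sᶜ) (mem_inter.mp h).1)]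
  · have hvS : v ∉ S := fun h => huS (hS.mpr h)
    constructor
    · rw [L1 S T u v hvS, erase_eq_of_notMem (fun h => huS (mem_inter.mp h).1)]
    · rw [L2 Sᶜ Tᶜ v u (by simpa using huS), card_insert_erase _ _ _
        (mem_inter.mpr ⟨by simpa using hvS, by simpa using hvT⟩)
        (fun h => (by simpa using huT : u ∉ Tᶜ) (mem_inter.mp h).2)]

lemma choose_two_succ (k : ℕ) : (k + 1).choose 2 = k.choose 2 + k := by
  rw [Nat.choose_succ_succ, Nat.choose_one_right, Nat.add_comm]

lemma phi_bij_mem (T : Finset (Fin r)) (u v : Fin r) (huv : u ≠ v)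
    (huT : u ∈ T) (hvT : v ∉ T) :
    (v ∈ insert v (T.erase u) ∧ u ∉ insert v (T.erase u)) ∧
      insert u ((insert v (T.erase u)).erase v) = T := by
  refine ⟨⟨mem_insert_self _ _, ?_⟩, ?_⟩
  · simp [huv, mem_erase]
  · rw [erase_insert (fun h => hvT (mem_of_mem_erase h)), insert_erase huT]

lemma key (hr : 4 ≤ r) (S : Finset (Fin r)) (u v : Fin r) (huv : u ≠ v)
    (huS : u ∈ S) (hvS : v ∉ S) :
    (∑ T ∈ Finset.univ.filter (fun T : Finset (Fin r) => u ∈ T ∧ v ∉ T), Mmat r S T)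
      - (∑ T ∈ Finset.univ.filter (fun T : Finset (Fin r) => v ∈ T ∧ u ∉ T), Mmat r S T)
      = 2 ^ (r - 3) * ((r : ℝ) - 2) := by
  have hbij : (∑ T ∈ Finset.univ.filter (fun T : Finset (Fin r) => u ∈ T ∧ v ∉ T),
      Mmat r S (insert v (T.erase u)))
      = ∑ T ∈ Finset.univ.filter (fun T : Finset (Fin r) => v ∈ T ∧ u ∉ T), Mmat r S T := by
    apply Finset.sum_nbij' (fun T => insert v (T.erase u)) (fun T => insert u (T.erase v))
    · intro T hT
      simp only [mem_filter, mem_univ, true_and] at hT ⊢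
      exact (phi_bij_mem T u v huv hT.1 hT.2).1
    · intro T hT
      simp only [mem_filter, mem_univ, true_and] at hT ⊢
      exact (phi_bij_mem T v u huv.symm hT.1 hT.2).1
    · intro T hT
      simp only [mem_filter, mem_univ, true_and] at hT
      exact (phi_bij_mem T u v huv hT.1 hT.2).2
    · intro T hT
      simp only [mem_filter, mem_univ, true_and] at hT
      exact (phi_bij_mem T v u huv.symm hT.1 hT.2).2
    · intro T _; rfl
  rw [← hbij, ← Finset.sum_sub_distrib]
  have hpt : ∀ T ∈ Finset.univ.filter (fun T : Finset (Fin r) => u ∈ T ∧ v ∉ T),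
      Mmat r S T - Mmat r S (insert v (T.erase u))
        = (((S ∩ T).card : ℝ) - 1) + (((Sᶜ ∩ Tᶜ).card : ℝ) - 1) := by
    intro T hT
    simp only [mem_filter, mem_univ, true_and] at hT
    obtain ⟨h1, h2⟩ := cards_asym S T u v huv huS hvS hT.1 hT.2
    unfold Mmat
    rw [← h1, ← h2, choose_two_succ, choose_two_succ]
    push_cast
    ring
  rw [Finset.sum_congr rfl hpt, Finset.sum_add_distrib, Finset.sum_sub_distrib,
    Finset.sum_sub_distrib]
  simp only [Finset.sum_const, smul_eq_mul, mul_one, ← Nat.cast_sum]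
  rw [sumInter S u v huv huS hvS, sumCompl S u v huv huS hvS, countA u v huv]
  have hsc : S.card + Sᶜ.card = r := by
    rw [Finset.card_add_card_compl]; simp
  have hS1 : 1 ≤ S.card := card_pos.mpr ⟨u, huS⟩
  have hS2 : 1 ≤ Sᶜ.card := card_pos.mpr ⟨v, by simpa using hvS⟩
  have h23 : (2 : ℝ) ^ (r - 2) = 2 * 2 ^ (r - 3) := by
    rw [← pow_succ']
    congr 1
    omega
  have hcast : (S.card : ℝ) + (Sᶜ.card : ℝ) = r := by exact_mod_cast hsc
  push_cast [Nat.cast_sub hS1, Nat.cast_sub hS2]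
  rw [h23]
  linear_combination ((2 : ℝ) ^ (r - 3)) * hcast - 2 * h23

lemma sym (S : Finset (Fin r)) (u v : Fin r) (huv : u ≠ v) (hS : u ∈ S ↔ v ∈ S) :
    (∑ T ∈ Finset.univ.filter (fun T : Finset (Fin r) => u ∈ T ∧ v ∉ T), Mmat r S T)
      = ∑ T ∈ Finset.univ.filter (fun T : Finset (Fin r) => v ∈ T ∧ u ∉ T), Mmat r S T := by
  apply Finset.sum_nbij' (fun T => insert v (T.erase u)) (fun T => insert u (T.erase v))
  · intro T hT
    simp only [mem_filter, mem_univ, true_and] at hT ⊢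
    exact (phi_bij_mem T u v huv hT.1 hT.2).1
  · intro T hT
    simp only [mem_filter, mem_univ, true_and] at hT ⊢
    exact (phi_bij_mem T v u huv.symm hT.1 hT.2).1
  · intro T hT
    simp only [mem_filter, mem_univ, true_and] at hT
    exact (phi_bij_mem T u v huv hT.1 hT.2).2
  · intro T hT
    simp only [mem_filter, mem_univ, true_and] at hT
    exact (phi_bij_mem T v u huv.symm hT.1 hT.2).2
  · intro T hT
    simp only [mem_filter, mem_univ, true_and] at hT
    obtain ⟨h1, h2⟩ := cards_sym S T u v huv hS hT.1 hT.2
    unfold Mmat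
    rw [h1, h2]

end FamilyEAux

open Finset FamilyEAux in
/-- For `r ≥ 4` and distinct `x, y ∈ [r]`, the vector `V` with
`V_T = 1_T(x) − 1_T(y)` is an eigenvector of `M_r` with eigenvalue `2^(r−3)·(r − 2)`. -/
theorem familyE_eigenvector (r : ℕ) (hr : 4 ≤ r) (x y : Fin r) (hxy : x ≠ y)
    (V : Finset (Fin r) → ℝ)
    (hV : ∀ T : Finset (Fin r),
      V T = (if x ∈ T then (1 : ℝ) else 0) - (if y ∈ T then (1 : ℝ) else 0)) :
    (Mmat r).mulVec V = ((2 : ℝ) ^ (r - 3) * ((r : ℝ) - 2)) • V ∧ V ≠ 0 := by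
  constructor
  · funext S
    have expand : ∀ T : Finset (Fin r), Mmat r S T * V T
        = (if x ∈ T ∧ y ∉ T then Mmat r S T else 0)
          - (if y ∈ T ∧ x ∉ T then Mmat r S T else 0) := by
      intro T
      rw [hV T]
      by_cases h1 : x ∈ T <;> by_cases h2 : y ∈ T <;> simp [h1, h2]
    have hsum : (Mmat r).mulVec V S
        = (∑ T ∈ Finset.univ.filter (fun T : Finset (Fin r) => x ∈ T ∧ y ∉ T), Mmat r S T)
          - ∑ T ∈ Finset.univ.filter (fun T : Finset (Fin r) => y ∈ T ∧ x ∉ T), Mmat r S T := by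
      simp only [Matrix.mulVec, dotProduct]
      rw [Finset.sum_congr rfl (fun T _ => expand T), Finset.sum_sub_distrib,
        Finset.sum_filter, Finset.sum_filter]
    rw [hsum]
    simp only [Pi.smul_apply, smul_eq_mul]
    by_cases hxS : x ∈ S <;> by_cases hyS : y ∈ S
    · rw [sym S x y hxy (by tauto)]
      simp [hV, hxS, hyS]
    · rw [key hr S x y hxy hxS hyS]
      simp [hV, hxS, hyS]
    · have hk := key hr S y x hxy.symm hyS hxS
      rw [hV S]
      simp only [hxS, hyS, if_true, if_false]
      linarith [hk]
    · rw [sym S x y hxy (by tauto)]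
      simp [hV, hxS, hyS]
  · intro h0
    have h1 := hV {x}
    rw [h0] at h1
    have hyx : y ∉ ({x} : Finset (Fin r)) := by
      simp [Ne.symm hxy]
    simp [hyx] at h1
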